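/- Let g be an element of the Farey group with ‖g‖ = n > 0, and write the image of {0, 1, ∞} under the Möbius transformation g as {p, r, q} with p < r < q ≤ ∞. Then either (p, r, q) = (n, n+1, ∞), or (p, r, q) = (−n, 1−n, ∞), or there exists m ∈ ℤ such that p − m and q − m are consecutive terms of the Farey sequence F_{n−|m|−1} and r − m = (p − m) ⊕ (q − m). -/

import Mathlib

open scoped MatrixGroups OnePoint
open Matrix MeasureTheory Filter Topology

noncomputable section

namespace Farey

/-- Möbius action of a real 2×2 matrix on `ℝ ∪ {∞}`. -/
def mobAux (M : Matrix (Fin 2) (Fin 2) ℝ) : OnePoint ℝ → OnePoint ℝ :=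
  OnePoint.rec (if M 1 0 = 0 then ∞ else ((M 0 0 / M 1 0 : ℝ) : OnePoint ℝ))
    (fun r => if M 1 0 * r + M 1 1 = 0 then ∞
      else (((M 0 0 * r + M 0 1) / (M 1 0 * r + M 1 1) : ℝ) : OnePoint ℝ))

@[simp] lemma mobAux_infty (M : Matrix (Fin 2) (Fin 2) ℝ) :
    mobAux M ∞ = if M 1 0 = 0 then ∞ else ((M 0 0 / M 1 0 : ℝ) : OnePoint ℝ) := rfl

@[simp] lemma mobAux_coe (M : Matrix (Fin 2) (Fin 2) ℝ) (r : ℝ) :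
    mobAux M (r : OnePoint ℝ) = if M 1 0 * r + M 1 1 = 0 then ∞
      else (((M 0 0 * r + M 0 1) / (M 1 0 * r + M 1 1) : ℝ) : OnePoint ℝ) := rfl

lemma mobAux_neg (M : Matrix (Fin 2) (Fin 2) ℝ) : mobAux (-M) = mobAux M := by
  funext x
  induction x using OnePoint.rec with
  | infty => simp [Matrix.neg_apply, neg_eq_zero, neg_div_neg_eq]
  | coe r =>
      rw [mobAux_coe, mobAux_coe]
      have h1 : (-M) 1 0 * r + (-M) 1 1 = -(M 1 0 * r + M 1 1) := by
        simp [Matrix.neg_apply]; ring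
      have h0 : (-M) 0 0 * r + (-M) 0 1 = -(M 0 0 * r + M 0 1) := by
        simp [Matrix.neg_apply]; ring
      rw [h1, h0]
      simp only [neg_eq_zero, neg_div_neg_eq]

end Farey

namespace Farey

/-- Möbius action of an integral 2×2 special linear matrix on `ℝ ∪ {∞}`. -/
def mobSL (g : SL(2, ℤ)) : OnePoint ℝ → OnePoint ℝ :=
  mobAux ((g : Matrix (Fin 2) (Fin 2) ℤ).map (Int.cast : ℤ → ℝ))

lemma mobSL_mul_center (g z : SL(2, ℤ)) (hz : z ∈ Subgroup.center SL(2, ℤ)) :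
    mobSL (g * z) = mobSL g := by
  obtain ⟨r, hr, hscalar⟩ := Matrix.SpecialLinearGroup.mem_center_iff.mp hz
  have hr' : r = 1 ∨ r = -1 := by
    have : IsUnit r := IsUnit.of_mul_eq_one (a := r) (r ^ 1) (by
      simpa [pow_succ, Fintype.card_fin] using hr)
    exact Int.isUnit_iff.mp this
  rcases hr' with h1 | h1
  · have : z = 1 := by
      ext i j
      have := congrFun (congrFun hscalar i) j
      simp [h1] at this
      simp [← this]
    simp [this]
  · have hzmat : (z : Matrix (Fin 2) (Fin 2) ℤ) = -1 := by
      ext i j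
      have := congrFun (congrFun hscalar i) j
      simp [h1] at this
      simp [← this]
    unfold mobSL
    have : ((g * z : SL(2,ℤ)) : Matrix (Fin 2) (Fin 2) ℤ) = -(g : Matrix (Fin 2) (Fin 2) ℤ) := by
      rw [Matrix.SpecialLinearGroup.coe_mul, hzmat]
      simp
    rw [this]
    have hmap : ((-(g : Matrix (Fin 2) (Fin 2) ℤ)).map (Int.cast : ℤ → ℝ))
        = -(((g : Matrix (Fin 2) (Fin 2) ℤ)).map (Int.cast : ℤ → ℝ)) := by
      ext i j
      simp
    rw [hmap, mobAux_neg]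

/-- Möbius action of an element of `PSL(2,ℤ)` on `ℝ ∪ {∞}`. -/
def mob (x : PSL(2, ℤ)) : OnePoint ℝ → OnePoint ℝ :=
  Quotient.liftOn' x mobSL (by
    intro g h hgh
    have hmem : g⁻¹ * h ∈ Subgroup.center SL(2, ℤ) := QuotientGroup.leftRel_apply.mp hgh
    have : h = g * (g⁻¹ * h) := by group
    rw [this, mobSL_mul_center g _ hmem])

end Farey

namespace Farey

/-- The matrix `A = [[1,-2],[1,-1]]` as an element of `SL(2,ℤ)`. -/
def A : SL(2, ℤ) := ⟨!![1, -2; 1, -1], by norm_num [Matrix.det_fin_two_of]⟩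

/-- The matrix `B = [[0,-1],[1,0]]` as an element of `SL(2,ℤ)`. -/
def B : SL(2, ℤ) := ⟨!![0, -1; 1, 0], by norm_num [Matrix.det_fin_two_of]⟩

/-- The matrix `C = [[1,-1],[2,-1]]` as an element of `SL(2,ℤ)`. -/
def C : SL(2, ℤ) := ⟨!![1, -1; 2, -1], by norm_num [Matrix.det_fin_two_of]⟩

/-- The element `a ∈ PSL(2,ℤ)`. -/
def a : PSL(2, ℤ) := QuotientGroup.mk A

/-- The element `b ∈ PSL(2,ℤ)`. -/
def b : PSL(2, ℤ) := QuotientGroup.mk B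

/-- The element `c ∈ PSL(2,ℤ)`. -/
def c : PSL(2, ℤ) := QuotientGroup.mk C

/-- The Farey group: the subgroup of `PSL(2,ℤ)` generated by `a`, `b`, `c`. -/
def fareyGroup : Subgroup PSL(2, ℤ) := Subgroup.closure {a, b, c}

/-- The word length of an element of `PSL(2,ℤ)` with respect to the generators
`a`, `b`, `c` of the Farey group. -/
def wordLength (x : PSL(2, ℤ)) : ℕ :=
  sInf {n | ∃ l : List PSL(2, ℤ), l.length = n ∧ (∀ s ∈ l, s = a ∨ s = b ∨ s = c) ∧ l.prod = x}

/-- The sphere of radius `n` in the Farey group for the word metric w.r.t. `{a,b,c}`. -/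
def sphere (n : ℕ) : Set PSL(2, ℤ) := {x | x ∈ fareyGroup ∧ wordLength x = n}

end Farey

namespace Farey

/-- The mediant of two rationals, `p₁/q₁ ⊕ p₂/q₂ = (p₁+p₂)/(q₁+q₂)` (in lowest terms). -/
def mediant (p q : ℚ) : ℚ := ((p.num + q.num : ℤ) : ℚ) / (((p.den : ℤ) + (q.den : ℤ) : ℤ) : ℚ)

/-- Insert the mediant between every two consecutive entries of a list of rationals. -/
def insertMediants : List ℚ → List ℚ
  | p :: q :: rest => p :: mediant p q :: insertMediants (q :: rest)
  | l => l

/-- The Farey sequences: `F_0 = (0,1)`, and `F_{n+1}` is obtained from `F_n` by inserting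
mediants between consecutive terms. -/
def fareySeq : ℕ → List ℚ
  | 0 => [0, 1]
  | n + 1 => insertMediants (fareySeq n)

/-- `p, q` are consecutive terms of the Farey sequence `F_n`. -/
def IsFareyPairIn (n : ℕ) (p q : ℚ) : Prop :=
  ∃ i : ℕ, (fareySeq n)[i]? = some p ∧ (fareySeq n)[i + 1]? = some q

/-- `p, q` form a Farey pair: they are consecutive terms of some Farey sequence. -/
def IsFareyPair (p q : ℚ) : Prop := ∃ n : ℕ, IsFareyPairIn n p q

/-- The `k`-th summand (`k = 0, 1, 2, …`) in the series defining Minkowski's question mark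
function: `(−1)^k 2^{−(a₁+⋯+a_{k+1})}` when the continued fraction expansion
`x = [a₀; a₁, a₂, …]` has at least `k+1` partial denominators and `0` otherwise. -/
def qmTerm (x : ℝ) (k : ℕ) : ℝ :=
  match (List.range (k + 1)).mapM (fun i => (GenContFract.of x).partDens.get? i) with
  | none => 0
  | some l => (-1 : ℝ) ^ k * (2 : ℝ) ^ (-(l.sum))

/-- Minkowski's question mark function on `[0,1]`:
`?(x) = 2 ∑_{k≥1} (−1)^{k+1} 2^{−(a₁+⋯+a_k)}` for `x = [0; a₁, a₂, …]`, `?(1) = 1`. -/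
def questionMark (x : ℝ) : ℝ := if x = 1 then 1 else 2 * ∑' k : ℕ, qmTerm x k

/-- The extended Minkowski function `M̄(q) = (1/3)(∑_{k=−∞}^{m−1} 2^{−|k|} + ?(q−m)·2^{−|m|})`
for `q ∈ [m, m+1]`. -/
def extM (q : ℝ) : ℝ :=
  (1 / 3) * ((∑' j : ℕ, (2 : ℝ) ^ (-|⌊q⌋ - 1 - (j : ℤ)|)) +
    questionMark (q - ⌊q⌋) * (2 : ℝ) ^ (-|⌊q⌋|))

instance : MeasurableSpace (OnePoint ℝ) := borel _
instance : BorelSpace (OnePoint ℝ) := ⟨rfl⟩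

/-- `μ` is the extended Minkowski measure: the Borel probability measure on `ℝ ∪ {∞}` giving
no mass to `{∞}` whose cumulative distribution function is the extended Minkowski function. -/
def IsExtMinkowskiMeasure (μ : Measure (OnePoint ℝ)) : Prop :=
  IsProbabilityMeasure μ ∧ μ {∞} = 0 ∧
    ∀ u v : ℝ, u ≤ v →
      μ ((fun r : ℝ => (r : OnePoint ℝ)) '' Set.Ico u v) = ENNReal.ofReal (extM v - extM u)

end Farey

namespace Farey

/-! ### Basic rational / mediant lemmas -/

lemma mediant_num_den {p q : ℚ} (h : q.num * p.den - p.num * q.den = 1) :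
    (mediant p q).num = p.num + q.num ∧ ((mediant p q).den : ℤ) = (p.den : ℤ) + q.den := by
  have hb0 : (0:ℤ) < (p.den : ℤ) + (q.den : ℤ) := by positivity
  have hcop : IsCoprime (p.num + q.num) ((p.den : ℤ) + (q.den : ℤ)) :=
    ⟨-(q.den : ℤ), q.num, by linear_combination h⟩
  have hcop' : Nat.Coprime (p.num + q.num).natAbs ((p.den : ℤ) + (q.den : ℤ)).natAbs :=
    Int.isCoprime_iff_gcd_eq_one.mp hcop
  have hme : mediant p q = ((p.num + q.num : ℤ) : ℚ) / (((p.den : ℤ) + (q.den : ℤ) : ℤ) : ℚ) := rfl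
  constructor
  · rw [hme]; exact Rat.num_div_eq_of_coprime hb0 hcop'
  · rw [hme]; exact Rat.den_div_eq_of_coprime hb0 hcop'

/-! ### Farey sequence adjacency lemmas -/

lemma insertMediants_head (x : ℚ) (xs : List ℚ) :
    (insertMediants (x :: xs))[0]? = some x := by
  cases xs <;> rfl

lemma insertMediants_adj :
    ∀ (l : List ℚ) (i : ℕ) (p q : ℚ), l[i]? = some p → l[i+1]? = some q →
      (insertMediants l)[2*i]? = some p ∧ (insertMediants l)[2*i+1]? = some (mediant p q) ∧
        (insertMediants l)[2*i+2]? = some q := by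
  intro l
  induction l with
  | nil => intro i p q h1 _; simp at h1
  | cons x xs ih =>
      intro i p q h1 h2
      match xs, i with
      | [], 0 => simp at h2
      | [], (j+1) => simp at h2
      | y :: ys, 0 =>
          have h1' : x = p := by simpa using h1
          have h2' : y = q := by simpa using h2
          subst h1'; subst h2'
          refine ⟨rfl, by show (x :: mediant x y :: insertMediants (y :: ys))[2 * 0 + 1]? = _; norm_num, ?_⟩
          show (x :: mediant x y :: insertMediants (y :: ys))[2]? = some y
          simpa using insertMediants_head y ys
      | y :: ys, (j+1) =>
          have h1' : (y :: ys)[j]? = some p := by simpa using h1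
          have h2' : (y :: ys)[j+1]? = some q := by simpa using h2
          obtain ⟨e1, e2, e3⟩ := ih j p q h1' h2'
          have hexp : insertMediants (x :: y :: ys) = x :: mediant x y :: insertMediants (y :: ys) := rfl
          refine ⟨?_, ?_, ?_⟩
          · rw [hexp, show 2*(j+1) = (2*j) + 1 + 1 by ring]
            simpa using e1
          · rw [hexp, show 2*(j+1)+1 = (2*j+1) + 1 + 1 by ring]
            simpa using e2
          · rw [hexp, show 2*(j+1)+2 = (2*j+2) + 1 + 1 by ring]
            simpa using e3

lemma isFareyPairIn_zero : IsFareyPairIn 0 0 1 := by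
  refine ⟨0, ?_, ?_⟩ <;> rfl

lemma isFareyPairIn_left {k : ℕ} {p q : ℚ} (h : IsFareyPairIn k p q) :
    IsFareyPairIn (k+1) p (mediant p q) := by
  obtain ⟨i, h1, h2⟩ := h
  obtain ⟨e1, e2, _⟩ := insertMediants_adj (fareySeq k) i p q h1 h2
  exact ⟨2*i, e1, e2⟩

lemma isFareyPairIn_right {k : ℕ} {p q : ℚ} (h : IsFareyPairIn k p q) :
    IsFareyPairIn (k+1) (mediant p q) q := by
  obtain ⟨i, h1, h2⟩ := h
  obtain ⟨_, e2, e3⟩ := insertMediants_adj (fareySeq k) i p q h1 h2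
  exact ⟨2*i+1, e2, e3⟩

/-! ### Letters and tiles -/

inductive L3 | la | lb | lc

def tau : L3 → L3 | .la => .lb | .lb => .lc | .lc => .la

def gen : L3 → PSL(2,ℤ) | .la => a | .lb => b | .lc => c

def genM : L3 → SL(2,ℤ) | .la => A | .lb => B | .lc => C

lemma gen_eq_mk (r : L3) : gen r = QuotientGroup.mk (genM r) := by cases r <;> rfl

inductive Tile where
  | fanP : Tile
  | fanN : Tile
  | fin (m : ℤ) (k : ℕ) (p q : ℚ) : Tile

def Xv (n : ℕ) : Tile → ℤ × ℤ
  | .fanP => ((n : ℤ), 1)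
  | .fanN => (-(n : ℤ), 1)
  | .fin m _ p _ => (p.num + m * p.den, (p.den : ℤ))

def Zv (_ : ℕ) : Tile → ℤ × ℤ
  | .fanP => (1, 0)
  | .fanN => (1, 0)
  | .fin m _ _ q => (q.num + m * q.den, (q.den : ℤ))

def matM' (X Z : ℤ × ℤ) : L3 → Matrix (Fin 2) (Fin 2) ℤ
  | .la => !![X.1, -(X.1+Z.1); X.2, -(X.2+Z.2)]
  | .lb => !![Z.1, X.1; Z.2, X.2]
  | .lc => !![-(X.1+Z.1), Z.1; -(X.2+Z.2), Z.2]

def matM (n : ℕ) (t : Tile) (r : L3) : Matrix (Fin 2) (Fin 2) ℤ :=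
  matM' (Xv n t) (Zv n t) r

def Lt (n : ℕ) : Tile → Tile
  | .fanP => .fin (n : ℤ) 0 0 1
  | .fanN => .fin (-(n : ℤ)) 0 0 1
  | .fin m k p q => .fin m (k+1) p (mediant p q)

def Rt : Tile → Tile
  | .fanP => .fanP
  | .fanN => .fanN
  | .fin m k p q => .fin m (k+1) (mediant p q) q

/-- The tree of elements of the Farey group, labelled by word length, tile data and a
rotation marker. -/
inductive Node : ℕ → PSL(2,ℤ) → Tile → L3 → Prop where
  | root : Node 0 1 .fanN .lb
  | spine {n g r} : Node n g .fanN r → Node (n+1) (g * gen r) .fanN (tau r)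
  | childL {n g t r} : Node n g t r → Node (n+1) (g * gen (tau r)) (Lt n t) (tau r)
  | childR {n g t r} : Node n g t r → t ≠ .fanN →
      Node (n+1) (g * gen (tau (tau r))) (Rt t) (tau (tau r))
  | rootR {g r} : Node 0 g .fanN r → Node 1 (g * gen (tau (tau r))) .fanP (tau (tau r))

/-! ### Matrix identities -/

lemma matL (X Z : ℤ × ℤ) (r : L3) :
    matM' X Z r * (genM (tau r) : Matrix (Fin 2) (Fin 2) ℤ) = -matM' X (X+Z) (tau r) := by
  cases r <;>
    · simp only [matM', genM, tau, A, B, C]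
      ext i j
      fin_cases i <;> fin_cases j <;>
        simp [Matrix.mul_apply, Fin.sum_univ_two] <;> ring

lemma matR (X Z : ℤ × ℤ) (r : L3) :
    matM' X Z r * (genM (tau (tau r)) : Matrix (Fin 2) (Fin 2) ℤ) = matM' (X+Z) Z (tau (tau r)) := by
  cases r <;>
    · simp only [matM', genM, tau, A, B, C]
      ext i j
      fin_cases i <;> fin_cases j <;>
        simp [Matrix.mul_apply, Fin.sum_univ_two] <;> ring

lemma matS (X Z : ℤ × ℤ) (r : L3) :
    matM' X Z r * (genM r : Matrix (Fin 2) (Fin 2) ℤ) = -matM' (X-Z) Z (tau r) := by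
  cases r <;>
    · simp only [matM', genM, tau, A, B, C]
      ext i j
      fin_cases i <;> fin_cases j <;>
        simp [Matrix.mul_apply, Fin.sum_univ_two] <;> ring


/-! ### PSL(2,ℤ) sign and involution lemmas -/

lemma neg_one_mem_center : (-1 : SL(2,ℤ)) ∈ Subgroup.center SL(2,ℤ) := by
  rw [Matrix.SpecialLinearGroup.mem_center_iff]
  refine ⟨-1, by norm_num, ?_⟩
  rw [Matrix.SpecialLinearGroup.coe_neg]
  simp

lemma mk_neg_eq (M : SL(2,ℤ)) :
    (QuotientGroup.mk (-M) : PSL(2,ℤ)) = QuotientGroup.mk M := by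
  have h : (-M : SL(2,ℤ)) = M * (-1) := by
    ext i j
    simp [Matrix.SpecialLinearGroup.coe_neg, Matrix.SpecialLinearGroup.coe_mul]
  rw [h, QuotientGroup.mk_mul]
  have h1 : (QuotientGroup.mk (-1 : SL(2,ℤ)) : PSL(2,ℤ)) = 1 :=
    (QuotientGroup.eq_one_iff _).mpr neg_one_mem_center
  rw [h1, mul_one]

lemma genM_sq (r : L3) : ((genM r : SL(2,ℤ)) : Matrix (Fin 2) (Fin 2) ℤ)
    * ((genM r : SL(2,ℤ)) : Matrix (Fin 2) (Fin 2) ℤ) = -1 := by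
  cases r <;>
    · simp only [genM, A, B, C]
      ext i j
      fin_cases i <;> fin_cases j <;>
        simp [Matrix.mul_apply, Fin.sum_univ_two]

lemma gen_sq (r : L3) : gen r * gen r = 1 := by
  rw [gen_eq_mk, ← QuotientGroup.mk_mul]
  have h : genM r * genM r = -1 := by
    ext i j
    rw [Matrix.SpecialLinearGroup.coe_mul, genM_sq r, Matrix.SpecialLinearGroup.coe_neg]
    simp
  rw [h]
  exact (QuotientGroup.eq_one_iff _).mpr neg_one_mem_center

lemma gen_mem (r : L3) : gen r ∈ fareyGroup := by
  cases r <;>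
    · apply Subgroup.subset_closure
      simp [gen]


/-! ### Invariants of nodes -/

def Uni : Tile → Prop
  | .fin _ _ p q => q.num * p.den - p.num * q.den = 1
  | _ => True

lemma node_uni {n g t r} (h : Node n g t r) : Uni t := by
  induction h with
  | root => trivial
  | spine hp ih => trivial
  | rootR hp ih => trivial
  | childL hp ih =>
      rename_i n g t r
      cases t with
      | fanP => show (1:ℚ).num * ((0:ℚ).den : ℤ) - (0:ℚ).num * ((1:ℚ).den : ℤ) = 1; simp
      | fanN => show (1:ℚ).num * ((0:ℚ).den : ℤ) - (0:ℚ).num * ((1:ℚ).den : ℤ) = 1; simp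
      | fin m k p q =>
          obtain ⟨hn, hd⟩ := mediant_num_den ih
          have ih' : q.num * (p.den : ℤ) - p.num * (q.den : ℤ) = 1 := ih
          show (mediant p q).num * (p.den : ℤ) - p.num * ((mediant p q).den : ℤ) = 1
          rw [hn, hd]
          linear_combination ih'
  | childR hp hne ih =>
      rename_i n g t r
      cases t with
      | fanP => trivial
      | fanN => trivial
      | fin m k p q =>
          obtain ⟨hn, hd⟩ := mediant_num_den ih
          have ih' : q.num * (p.den : ℤ) - p.num * (q.den : ℤ) = 1 := ih
          show q.num * ((mediant p q).den : ℤ) - (mediant p q).num * (q.den : ℤ) = 1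
          rw [hn, hd]
          linear_combination ih'

def FP : ℕ → Tile → Prop
  | n, .fin m k p q => IsFareyPairIn k p q ∧ (n : ℤ) = k + |m| + 1
  | _, _ => True

lemma node_fp {n g t r} (h : Node n g t r) : FP n t := by
  induction h with
  | root => trivial
  | spine hp ih => trivial
  | rootR hp ih => trivial
  | childL hp ih =>
      rename_i n g t r
      cases t with
      | fanP =>
          refine ⟨isFareyPairIn_zero, ?_⟩
          rw [abs_of_nonneg (by positivity : (0:ℤ) ≤ (n:ℤ))]
          push_cast; ring
      | fanN =>
          refine ⟨isFareyPairIn_zero, ?_⟩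
          rw [abs_neg, abs_of_nonneg (by positivity : (0:ℤ) ≤ (n:ℤ))]
          push_cast; ring
      | fin m k p q =>
          obtain ⟨h1, h2⟩ := ih
          exact ⟨isFareyPairIn_left h1, by push_cast at h2 ⊢; linarith⟩
  | childR hp hne ih =>
      rename_i n g t r
      cases t with
      | fanP => trivial
      | fanN => trivial
      | fin m k p q =>
          obtain ⟨h1, h2⟩ := ih
          exact ⟨isFareyPairIn_right h1, by push_cast at h2 ⊢; linarith⟩

/-! ### Realization: every node is a product of generators -/

lemma gen_cases (r : L3) : gen r = a ∨ gen r = b ∨ gen r = c := by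
  cases r
  · exact Or.inl rfl
  · exact Or.inr (Or.inl rfl)
  · exact Or.inr (Or.inr rfl)

lemma words_step {n : ℕ} {g : PSL(2,ℤ)}
    (ih : ∃ l : List PSL(2,ℤ), l.length = n ∧ (∀ s ∈ l, s = a ∨ s = b ∨ s = c) ∧ l.prod = g)
    (r : L3) :
    ∃ l : List PSL(2,ℤ), l.length = n + 1 ∧ (∀ s ∈ l, s = a ∨ s = b ∨ s = c) ∧
      l.prod = g * gen r := by
  obtain ⟨l, hl, hmem, hprod⟩ := ih
  refine ⟨l ++ [gen r], by simp [hl], ?_, by simp [hprod]⟩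
  intro s hs
  rcases List.mem_append.mp hs with h | h
  · exact hmem s h
  · rw [List.mem_singleton] at h
    subst h
    exact gen_cases r

lemma node_words {n g t r} (h : Node n g t r) :
    ∃ l : List PSL(2,ℤ), l.length = n ∧ (∀ s ∈ l, s = a ∨ s = b ∨ s = c) ∧ l.prod = g := by
  induction h with
  | root => exact ⟨[], rfl, by simp, rfl⟩
  | spine hp ih => exact words_step ih _
  | childL hp ih => exact words_step ih _
  | childR hp hne ih => exact words_step ih _
  | rootR hp ih => exact words_step ih _

/-! ### Frame transition lemmas -/

lemma frame_spine (n : ℕ) :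
    Xv (n+1) .fanN = Xv n .fanN - Zv n .fanN ∧ Zv (n+1) .fanN = Zv n .fanN := by
  constructor
  · show (-(n+1 : ℤ), (1:ℤ)) = (-(n:ℤ), (1:ℤ)) - (1, 0)
    rw [Prod.mk_sub_mk, Prod.mk.injEq]
    constructor <;> push_cast <;> ring
  · rfl

lemma frame_L (n : ℕ) (t : Tile) (hu : Uni t) :
    Xv (n+1) (Lt n t) = Xv n t ∧ Zv (n+1) (Lt n t) = Xv n t + Zv n t := by
  cases t with
  | fanP =>
      constructor
      · show ((0:ℚ).num + n * ((0:ℚ).den : ℤ), ((0:ℚ).den : ℤ)) = ((n:ℤ), 1)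
        simp
      · show ((1:ℚ).num + n * ((1:ℚ).den : ℤ), ((1:ℚ).den : ℤ)) = ((n:ℤ), 1) + (1, 0)
        rw [Prod.mk_add_mk, Prod.mk.injEq]
        constructor <;> simp [add_comm]
  | fanN =>
      constructor
      · show ((0:ℚ).num + (-(n:ℤ)) * ((0:ℚ).den : ℤ), ((0:ℚ).den : ℤ)) = (-(n:ℤ), 1)
        simp
      · show ((1:ℚ).num + (-(n:ℤ)) * ((1:ℚ).den : ℤ), ((1:ℚ).den : ℤ)) = (-(n:ℤ), 1) + (1, 0)
        rw [Prod.mk_add_mk, Prod.mk.injEq]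
        constructor <;> simp <;> ring
  | fin m k p q =>
      obtain ⟨hn, hd⟩ := mediant_num_den hu
      constructor
      · rfl
      · show ((mediant p q).num + m * ((mediant p q).den : ℤ), ((mediant p q).den : ℤ))
            = (p.num + m * p.den, (p.den : ℤ)) + (q.num + m * q.den, (q.den : ℤ))
        rw [Prod.mk_add_mk, Prod.mk.injEq, hn, hd]
        constructor <;> ring

lemma frame_R (n : ℕ) (t : Tile) (hu : Uni t) (hne : t ≠ .fanN) :
    Xv (n+1) (Rt t) = Xv n t + Zv n t ∧ Zv (n+1) (Rt t) = Zv n t := by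
  cases t with
  | fanN => exact absurd rfl hne
  | fanP =>
      constructor
      · show ((n+1 : ℤ), (1:ℤ)) = ((n:ℤ), 1) + (1, 0)
        rw [Prod.mk_add_mk, Prod.mk.injEq]
        constructor <;> push_cast <;> ring
      · rfl
  | fin m k p q =>
      obtain ⟨hn, hd⟩ := mediant_num_den hu
      constructor
      · show ((mediant p q).num + m * ((mediant p q).den : ℤ), ((mediant p q).den : ℤ))
            = (p.num + m * p.den, (p.den : ℤ)) + (q.num + m * q.den, (q.den : ℤ))
        rw [Prod.mk_add_mk, Prod.mk.injEq, hn, hd]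
        constructor <;> ring
      · rfl

lemma frame_rootR :
    Xv 1 .fanP = Xv 0 .fanN + Zv 0 .fanN ∧ Zv 1 .fanP = Zv 0 .fanN := by
  constructor
  · show ((1:ℤ), (1:ℤ)) = (-(0:ℤ), 1) + (1, 0)
    rw [Prod.mk_add_mk, Prod.mk.injEq]
    constructor <;> ring
  · rfl

/-! ### The matrix of a node -/

lemma node_mat {n g t r} (h : Node n g t r) :
    ∃ M : SL(2,ℤ), ((M : SL(2,ℤ)) : Matrix (Fin 2) (Fin 2) ℤ) = matM n t r ∧
      g = QuotientGroup.mk M := by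
  induction h with
  | root =>
      refine ⟨1, ?_, rfl⟩
      show (1 : Matrix (Fin 2) (Fin 2) ℤ) = matM' ((-(0:ℤ),1)) ((1,0)) .lb
      ext i j
      fin_cases i <;> fin_cases j <;> simp [matM', Matrix.one_apply]
  | spine hp ih =>
      rename_i n g r
      obtain ⟨M, hM, hg⟩ := ih
      refine ⟨-(M * genM r), ?_, ?_⟩
      · rw [Matrix.SpecialLinearGroup.coe_neg, Matrix.SpecialLinearGroup.coe_mul, hM]
        show -(matM' (Xv n .fanN) (Zv n .fanN) r * _) = matM' (Xv (n+1) .fanN) (Zv (n+1) .fanN) _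
        rw [matS, neg_neg, (frame_spine n).1, (frame_spine n).2]
      · rw [mk_neg_eq, hg, gen_eq_mk, QuotientGroup.mk_mul]
  | childL hp ih =>
      rename_i n g t r
      obtain ⟨M, hM, hg⟩ := ih
      refine ⟨-(M * genM (tau r)), ?_, ?_⟩
      · rw [Matrix.SpecialLinearGroup.coe_neg, Matrix.SpecialLinearGroup.coe_mul, hM]
        show -(matM' (Xv n t) (Zv n t) r * _)
            = matM' (Xv (n+1) (Lt n t)) (Zv (n+1) (Lt n t)) _
        rw [matL, neg_neg, (frame_L n t (node_uni hp)).1, (frame_L n t (node_uni hp)).2]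
      · rw [mk_neg_eq, hg, gen_eq_mk, QuotientGroup.mk_mul]
  | childR hp hne ih =>
      rename_i n g t r
      obtain ⟨M, hM, hg⟩ := ih
      refine ⟨M * genM (tau (tau r)), ?_, ?_⟩
      · rw [Matrix.SpecialLinearGroup.coe_mul, hM]
        show matM' (Xv n t) (Zv n t) r * _
            = matM' (Xv (n+1) (Rt t)) (Zv (n+1) (Rt t)) _
        rw [matR, (frame_R n t (node_uni hp) hne).1, (frame_R n t (node_uni hp) hne).2]
      · rw [hg, gen_eq_mk, QuotientGroup.mk_mul]
  | rootR hp ih =>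
      rename_i g r
      obtain ⟨M, hM, hg⟩ := ih
      refine ⟨M * genM (tau (tau r)), ?_, ?_⟩
      · rw [Matrix.SpecialLinearGroup.coe_mul, hM]
        show matM' (Xv 0 .fanN) (Zv 0 .fanN) r * _
            = matM' (Xv 1 .fanP) (Zv 1 .fanP) _
        rw [matR, frame_rootR.1, frame_rootR.2]
      · rw [hg, gen_eq_mk, QuotientGroup.mk_mul]


/-! ### Word length lemmas -/

lemma letter_sq {s : PSL(2,ℤ)} (hs : s = a ∨ s = b ∨ s = c) : s * s = 1 := by
  rcases hs with h | h | h <;> subst h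
  · exact gen_sq .la
  · exact gen_sq .lb
  · exact gen_sq .lc

lemma letter_mem {s : PSL(2,ℤ)} (hs : s = a ∨ s = b ∨ s = c) : s ∈ fareyGroup := by
  rcases hs with h | h | h <;> subst h <;> apply Subgroup.subset_closure <;> simp

lemma letters_reverse_prod (l : List PSL(2,ℤ)) (hmem : ∀ s ∈ l, s = a ∨ s = b ∨ s = c) :
    l.reverse.prod = l.prod⁻¹ := by
  induction l with
  | nil => simp
  | cons x xs ih =>
      have hx : x⁻¹ = x := inv_eq_of_mul_eq_one_right (letter_sq (hmem x (by simp)))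
      rw [List.reverse_cons, List.prod_append, ih (fun s hs => hmem s (by simp [hs]))]
      simp [hx, _root_.mul_inv_rev]

lemma exists_letter_list {g : PSL(2,ℤ)} (hg : g ∈ fareyGroup) :
    ∃ l : List PSL(2,ℤ), (∀ s ∈ l, s = a ∨ s = b ∨ s = c) ∧ l.prod = g := by
  refine Subgroup.closure_induction (k := {a, b, c})
    (p := fun x _ => ∃ l : List PSL(2,ℤ), (∀ s ∈ l, s = a ∨ s = b ∨ s = c) ∧ l.prod = x)
    ?_ ?_ ?_ ?_ hg
  · intro x hx
    refine ⟨[x], ?_, by simp⟩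
    intro s hs
    rw [List.mem_singleton] at hs
    subst hs
    simpa using hx
  · exact ⟨[], by simp, rfl⟩
  · rintro x y _ _ ⟨l1, h1, e1⟩ ⟨l2, h2, e2⟩
    refine ⟨l1 ++ l2, ?_, by rw [List.prod_append, e1, e2]⟩
    intro s hs
    rcases List.mem_append.mp hs with h | h
    exacts [h1 s h, h2 s h]
  · rintro x _ ⟨l, h1, e1⟩
    refine ⟨l.reverse, ?_, by rw [letters_reverse_prod l h1, e1]⟩
    intro s hs
    exact h1 s (List.mem_reverse.mp hs)

lemma wordLength_le {g : PSL(2,ℤ)} {n : ℕ}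
    (h : ∃ l : List PSL(2,ℤ), l.length = n ∧ (∀ s ∈ l, s = a ∨ s = b ∨ s = c) ∧ l.prod = g) :
    wordLength g ≤ n :=
  Nat.sInf_le h

lemma wordLength_spec {g : PSL(2,ℤ)} (hg : g ∈ fareyGroup) :
    ∃ l : List PSL(2,ℤ), l.length = wordLength g ∧
      (∀ s ∈ l, s = a ∨ s = b ∨ s = c) ∧ l.prod = g := by
  obtain ⟨l, h1, h2⟩ := exists_letter_list hg
  have hne : {n | ∃ l : List PSL(2,ℤ), l.length = n ∧
      (∀ s ∈ l, s = a ∨ s = b ∨ s = c) ∧ l.prod = g}.Nonempty := ⟨l.length, l, rfl, h1, h2⟩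
  exact Nat.sInf_mem hne

/-! ### Classification of elements by word length -/

lemma tau_tau_tau (r : L3) : tau (tau (tau r)) = r := by cases r <;> rfl

lemma node_parent {n : ℕ} {g : PSL(2,ℤ)} {t : Tile} {r : L3} (h : Node n g t r)
    (hne : t ≠ .fanN) :
    ∃ n₀ g₀ t₀ r₀, n = n₀ + 1 ∧ Node n₀ g₀ t₀ r₀ ∧ g = g₀ * gen r := by
  cases h with
  | root => exact absurd rfl hne
  | spine hp => exact absurd rfl hne
  | childL hp => exact ⟨_, _, _, _, rfl, hp, rfl⟩
  | childR hp hne' => exact ⟨_, _, _, _, rfl, hp, rfl⟩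
  | rootR hp => exact ⟨0, _, _, _, rfl, hp, rfl⟩

lemma node_fanN_parent {n : ℕ} {g : PSL(2,ℤ)} {t : Tile} {r : L3}
    (h : Node (n+1) g t r) (ht : t = .fanN) :
    ∃ g₀ r₀, Node n g₀ .fanN r₀ ∧ r = tau r₀ ∧ g = g₀ * gen r₀ := by
  cases h with
  | spine hp => exact ⟨_, _, hp, rfl, rfl⟩
  | childL hp =>
      rename_i g₀ t₀ r₀
      cases t₀ <;> simp [Lt] at ht
  | childR hp hne =>
      rename_i g₀ t₀ r₀
      cases t₀ with
      | fanN => exact absurd rfl hne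
      | fanP => simp [Rt] at ht
      | fin m k p q => simp [Rt] at ht
  | rootR hp => simp at ht

lemma classify : ∀ (n : ℕ) (g : PSL(2,ℤ)), g ∈ fareyGroup → wordLength g = n →
    ∃ t r, Node n g t r := by
  intro n
  induction n with
  | zero =>
      intro g hg h0
      obtain ⟨l, hl, _, hprod⟩ := wordLength_spec hg
      rw [h0] at hl
      rw [List.length_eq_zero_iff.mp hl] at hprod
      exact ⟨.fanN, .lb, by rw [← hprod]; exact Node.root⟩
  | succ n IH =>
      intro g hg h
      obtain ⟨l, hl, hmem, hprod⟩ := wordLength_spec hg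
      rw [h] at hl
      rcases List.eq_nil_or_concat' l with rfl | ⟨l', s, rfl⟩
      · simp at hl
      have hgs : g = l'.prod * s := by
        rw [← hprod, List.prod_append, List.prod_singleton]
      have hs : s = a ∨ s = b ∨ s = c := hmem s (by simp)
      have hmem' : ∀ x ∈ l', x = a ∨ x = b ∨ x = c := fun x hx => hmem x (by simp [hx])
      have hg' : l'.prod ∈ fareyGroup := Subgroup.list_prod_mem _ (fun x hx => letter_mem (hmem' x hx))
      have hl' : l'.length = n := by simpa using hl
      have hle : wordLength l'.prod ≤ n := wordLength_le ⟨l', hl', hmem', rfl⟩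
      have hge : n ≤ wordLength l'.prod := by
        obtain ⟨l'', h1, h2, h3⟩ := wordLength_spec hg'
        have hcat : wordLength g ≤ l''.length + 1 := by
          refine wordLength_le ⟨l'' ++ [s], by simp, ?_, by
            rw [List.prod_append, List.prod_singleton, h3, ← hgs]⟩
          intro x hx
          rcases List.mem_append.mp hx with hh | hh
          · exact h2 x hh
          · rw [List.mem_singleton] at hh; subst hh; exact hs
        rw [h, h1] at hcat
        omega
      have hwl' : wordLength l'.prod = n := le_antisymm hle hge
      obtain ⟨t, r, hnode⟩ := IH l'.prod hg' hwl'
      obtain ⟨g1, hg1, hnode⟩ : ∃ g1, g1 = l'.prod ∧ Node n g1 t r := ⟨l'.prod, rfl, hnode⟩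
      rw [← hg1] at hgs
      obtain ⟨r0, rfl⟩ : ∃ r0, s = gen r0 := by
        rcases hs with hh | hh | hh
        exacts [⟨.la, hh⟩, ⟨.lb, hh⟩, ⟨.lc, hh⟩]
      have htri : r0 = r ∨ r0 = tau r ∨ r0 = tau (tau r) := by
        cases r0 <;> cases r <;> simp [tau]
      -- helper: contradiction when g equals a strictly shorter node element
      have contra : ∀ (n₀ : ℕ) (g₀ : PSL(2,ℤ)) (t₀ : Tile) (r₀ : L3), Node n₀ g₀ t₀ r₀ →
          g = g₀ → n₀ + 2 ≤ n + 1 → False := by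
        intro n₀ g₀ t₀ rr hn₀ hgeq hlt
        have := wordLength_le (g := g) (n := n₀) (by
          obtain ⟨l0, e1, e2, e3⟩ := node_words hn₀
          exact ⟨l0, e1, e2, by rw [e3, hgeq]⟩)
        omega
      rcases htri with rfl | rfl | rfl
      · -- s = gen r : backtrack or spine move
        cases t with
        | fanN => exact ⟨_, _, by rw [hgs]; exact Node.spine hnode⟩
        | fanP =>
            obtain ⟨n₀, g₀, t₀, r₀, hn0, hp', hge⟩ := node_parent hnode (by simp)
            have hgeq : g = g₀ := by rw [hgs, hge, mul_assoc, gen_sq, mul_one]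
            exact absurd (contra n₀ g₀ t₀ r₀ hp' hgeq (by omega)) not_false
        | fin m k p q =>
            obtain ⟨n₀, g₀, t₀, r₀, hn0, hp', hge⟩ := node_parent hnode (by simp)
            have hgeq : g = g₀ := by rw [hgs, hge, mul_assoc, gen_sq, mul_one]
            exact absurd (contra n₀ g₀ t₀ r₀ hp' hgeq (by omega)) not_false
      · -- s = gen (tau r) : left child
        exact ⟨_, _, by rw [hgs]; exact Node.childL hnode⟩
      · -- s = gen (tau (tau r)) : right child, root extra child, or spine backtrack
        cases t with
        | fanP => exact ⟨_, _, by rw [hgs]; exact Node.childR hnode (by simp)⟩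
        | fin m k p q => exact ⟨_, _, by rw [hgs]; exact Node.childR hnode (by simp)⟩
        | fanN =>
            cases n with
            | zero => exact ⟨_, _, by rw [hgs]; exact Node.rootR hnode⟩
            | succ n' =>
                obtain ⟨g₀, r₀, hp', hr, hge⟩ := node_fanN_parent hnode rfl
                have hgeq : g = g₀ := by
                  rw [hgs, hge, hr, tau_tau_tau, mul_assoc, gen_sq, mul_one]
                exact absurd (contra n' g₀ _ _ hp' hgeq (by omega)) not_false

/-! ### Evaluation of the Möbius action of a node -/

def ptv (V : ℤ × ℤ) : OnePoint ℝ :=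
  if V.2 = 0 then ∞ else (((V.1 : ℝ) / (V.2 : ℝ) : ℝ) : OnePoint ℝ)

lemma tri_perm1 {α : Type*} (x y z : α) : ({y, z, x} : Set α) = {x, y, z} := by
  ext w; simp only [Set.mem_insert_iff, Set.mem_singleton_iff]; tauto

lemma tri_perm2 {α : Type*} (x y z : α) : ({z, x, y} : Set α) = {x, y, z} := by
  ext w; simp only [Set.mem_insert_iff, Set.mem_singleton_iff]; tauto

lemma ent00 (u v w s : ℤ) : ((!![u, v; w, s]).map (Int.cast : ℤ → ℝ)) 0 0 = (u : ℝ) := by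
  simp [Matrix.map_apply]
lemma ent01 (u v w s : ℤ) : ((!![u, v; w, s]).map (Int.cast : ℤ → ℝ)) 0 1 = (v : ℝ) := by
  simp [Matrix.map_apply]
lemma ent10 (u v w s : ℤ) : ((!![u, v; w, s]).map (Int.cast : ℤ → ℝ)) 1 0 = (w : ℝ) := by
  simp [Matrix.map_apply]
lemma ent11 (u v w s : ℤ) : ((!![u, v; w, s]).map (Int.cast : ℤ → ℝ)) 1 1 = (s : ℝ) := by
  simp [Matrix.map_apply]

lemma mobAux_pt0 (N : Matrix (Fin 2) (Fin 2) ℝ) :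
    mobAux N ((0:ℝ) : OnePoint ℝ) =
      if N 1 1 = 0 then ∞ else (((N 0 1) / (N 1 1) : ℝ) : OnePoint ℝ) := by
  rw [mobAux_coe]; norm_num

lemma mobAux_pt1 (N : Matrix (Fin 2) (Fin 2) ℝ) :
    mobAux N ((1:ℝ) : OnePoint ℝ) =
      if N 1 0 + N 1 1 = 0 then ∞
        else (((N 0 0 + N 0 1) / (N 1 0 + N 1 1) : ℝ) : OnePoint ℝ) := by
  rw [mobAux_coe]; norm_num

lemma mobSL_image (X Z : ℤ × ℤ) (hX : 0 < X.2) (hZ : 0 ≤ Z.2) (r : L3)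
    (M : SL(2,ℤ)) (hM : ((M : SL(2,ℤ)) : Matrix (Fin 2) (Fin 2) ℤ) = matM' X Z r) :
    mobSL M '' {((0:ℝ) : OnePoint ℝ), ((1:ℝ) : OnePoint ℝ), ∞} =
      {ptv X, ptv (X + Z), ptv Z} := by
  have himg : mobSL M '' {((0:ℝ) : OnePoint ℝ), ((1:ℝ) : OnePoint ℝ), ∞}
      = {mobSL M ((0:ℝ) : OnePoint ℝ), mobSL M ((1:ℝ) : OnePoint ℝ), mobSL M ∞} := by
    rw [Set.image_insert_eq, Set.image_insert_eq, Set.image_singleton]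
  have hx2 : (0:ℝ) < (X.2 : ℝ) := by exact_mod_cast hX
  have hz2 : (0:ℝ) ≤ (Z.2 : ℝ) := by exact_mod_cast hZ
  have hx2' : (X.2 : ℝ) ≠ 0 := ne_of_gt hx2
  have hxz : (X.2 : ℝ) + (Z.2 : ℝ) ≠ 0 := by positivity
  have hXZ2' : (X + Z).2 ≠ 0 := by
    rw [Prod.snd_add]; omega
  have hptvXZ : ptv (X + Z) = ((((X.1 : ℝ) + (Z.1 : ℝ)) / ((X.2 : ℝ) + (Z.2 : ℝ)) : ℝ) :
      OnePoint ℝ) := by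
    rw [ptv, if_neg hXZ2', Prod.fst_add, Prod.snd_add]
    push_cast
    rfl
  have hptvX : ptv X = ((((X.1 : ℝ)) / ((X.2 : ℝ)) : ℝ) : OnePoint ℝ) := by
    rw [ptv, if_neg (by omega : X.2 ≠ 0)]
  rw [himg]
  unfold mobSL
  rw [hM]
  cases r with
  | lb =>
      rw [show matM' X Z L3.lb = !![Z.1, X.1; Z.2, X.2] from rfl]
      have hp0 : mobAux ((!![Z.1, X.1; Z.2, X.2]).map (Int.cast : ℤ → ℝ))
          ((0:ℝ) : OnePoint ℝ) = ptv X := by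
        rw [mobAux_pt0, ent01, ent11, if_neg hx2', hptvX]
      have hp1 : mobAux ((!![Z.1, X.1; Z.2, X.2]).map (Int.cast : ℤ → ℝ))
          ((1:ℝ) : OnePoint ℝ) = ptv (X + Z) := by
        rw [mobAux_pt1, ent00, ent01, ent10, ent11,
          if_neg (by intro hcon; apply hxz; linarith), hptvXZ]
        congr 1
        rw [add_comm ((Z.1:ℝ)), add_comm ((Z.2:ℝ))]
      have hpi : mobAux ((!![Z.1, X.1; Z.2, X.2]).map (Int.cast : ℤ → ℝ)) ∞ = ptv Z := by
        rw [mobAux_infty, ent00, ent10]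
        by_cases hz : Z.2 = 0
        · rw [if_pos (by exact_mod_cast hz), ptv, if_pos hz]
        · rw [if_neg (by exact_mod_cast hz), ptv, if_neg hz]
      rw [hp0, hp1, hpi]
  | la =>
      rw [show matM' X Z L3.la = !![X.1, -(X.1+Z.1); X.2, -(X.2+Z.2)] from rfl]
      have h01 : ((-(X.1+Z.1) : ℤ) : ℝ) = -((X.1:ℝ) + (Z.1:ℝ)) := by push_cast; ring
      have h11 : ((-(X.2+Z.2) : ℤ) : ℝ) = -((X.2:ℝ) + (Z.2:ℝ)) := by push_cast; ring
      have hp0 : mobAux ((!![X.1, -(X.1+Z.1); X.2, -(X.2+Z.2)]).map (Int.cast : ℤ → ℝ))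
          ((0:ℝ) : OnePoint ℝ) = ptv (X + Z) := by
        rw [mobAux_pt0, ent01, ent11, h01, h11, if_neg (neg_ne_zero.mpr hxz),
          neg_div_neg_eq, hptvXZ]
      have hp1 : mobAux ((!![X.1, -(X.1+Z.1); X.2, -(X.2+Z.2)]).map (Int.cast : ℤ → ℝ))
          ((1:ℝ) : OnePoint ℝ) = ptv Z := by
        rw [mobAux_pt1, ent00, ent01, ent10, ent11, h01, h11]
        have hd : (X.2:ℝ) + -((X.2:ℝ) + (Z.2:ℝ)) = -(Z.2:ℝ) := by ring
        have hnum : (X.1:ℝ) + -((X.1:ℝ) + (Z.1:ℝ)) = -(Z.1:ℝ) := by ring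
        rw [hd, hnum]
        by_cases hz : Z.2 = 0
        · have hz' : (Z.2 : ℝ) = 0 := by exact_mod_cast hz
          rw [if_pos (by rw [hz']; ring), ptv, if_pos hz]
        · have hz' : (Z.2 : ℝ) ≠ 0 := by exact_mod_cast hz
          rw [if_neg (by simpa using hz'), neg_div_neg_eq, ptv, if_neg hz]
      have hpi : mobAux ((!![X.1, -(X.1+Z.1); X.2, -(X.2+Z.2)]).map (Int.cast : ℤ → ℝ)) ∞
          = ptv X := by
        rw [mobAux_infty, ent00, ent10, if_neg hx2', hptvX]
      rw [hp0, hp1, hpi]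
      exact tri_perm1 _ _ _
  | lc =>
      rw [show matM' X Z L3.lc = !![-(X.1+Z.1), Z.1; -(X.2+Z.2), Z.2] from rfl]
      have h00 : ((-(X.1+Z.1) : ℤ) : ℝ) = -((X.1:ℝ) + (Z.1:ℝ)) := by push_cast; ring
      have h10 : ((-(X.2+Z.2) : ℤ) : ℝ) = -((X.2:ℝ) + (Z.2:ℝ)) := by push_cast; ring
      have hp0 : mobAux ((!![-(X.1+Z.1), Z.1; -(X.2+Z.2), Z.2]).map (Int.cast : ℤ → ℝ))
          ((0:ℝ) : OnePoint ℝ) = ptv Z := by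
        rw [mobAux_pt0, ent01, ent11]
        by_cases hz : Z.2 = 0
        · rw [if_pos (by exact_mod_cast hz), ptv, if_pos hz]
        · rw [if_neg (by exact_mod_cast hz), ptv, if_neg hz]
      have hp1 : mobAux ((!![-(X.1+Z.1), Z.1; -(X.2+Z.2), Z.2]).map (Int.cast : ℤ → ℝ))
          ((1:ℝ) : OnePoint ℝ) = ptv X := by
        rw [mobAux_pt1, ent00, ent01, ent10, ent11, h00, h10]
        have hd : -((X.2:ℝ) + (Z.2:ℝ)) + (Z.2:ℝ) = -(X.2:ℝ) := by ring
        have hnum : -((X.1:ℝ) + (Z.1:ℝ)) + (Z.1:ℝ) = -(X.1:ℝ) := by ring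
        rw [hd, hnum, if_neg (by simpa using hx2'), neg_div_neg_eq, hptvX]
      have hpi : mobAux ((!![-(X.1+Z.1), Z.1; -(X.2+Z.2), Z.2]).map (Int.cast : ℤ → ℝ)) ∞
          = ptv (X + Z) := by
        rw [mobAux_infty, ent00, ent10, h00, h10, if_neg (neg_ne_zero.mpr hxz),
          neg_div_neg_eq, hptvXZ]
      rw [hp0, hp1, hpi]
      exact tri_perm2 _ _ _

lemma Xv_pos (n : ℕ) (t : Tile) : 0 < (Xv n t).2 := by
  cases t with
  | fanP => norm_num [Xv]
  | fanN => norm_num [Xv]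
  | fin m k p q =>
      show (0:ℤ) < (p.den : ℤ)
      exact_mod_cast p.pos

lemma Zv_nonneg (n : ℕ) (t : Tile) : 0 ≤ (Zv n t).2 := by
  cases t with
  | fanP => norm_num [Zv]
  | fanN => norm_num [Zv]
  | fin m k p q =>
      show (0:ℤ) ≤ (q.den : ℤ)
      positivity

lemma mob_mk (M : SL(2,ℤ)) : mob (QuotientGroup.mk M) = mobSL M := rfl

lemma node_image {n : ℕ} {g : PSL(2,ℤ)} {t : Tile} {r : L3} (h : Node n g t r) :
    mob g '' {((0:ℝ) : OnePoint ℝ), ((1:ℝ) : OnePoint ℝ), ∞} =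
      {ptv (Xv n t), ptv (Xv n t + Zv n t), ptv (Zv n t)} := by
  obtain ⟨M, hM, hg⟩ := node_mat h
  rw [hg, mob_mk]
  exact mobSL_image _ _ (Xv_pos n t) (Zv_nonneg n t) r M hM

/-! ### Endgame helpers -/

lemma ptv_fin_eq (m : ℤ) (x : ℚ) :
    ptv (x.num + m * x.den, (x.den : ℤ)) = (((m + x : ℚ) : ℝ) : OnePoint ℝ) := by
  have hd0 : (0:ℤ) < (x.den : ℤ) := by exact_mod_cast x.pos
  rw [ptv, if_neg (by omega : ((x.num + m * x.den, (x.den : ℤ)) : ℤ × ℤ).2 ≠ 0)]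
  congr 1
  rw [Rat.cast_add, Rat.cast_intCast, Rat.cast_def]
  have hd' : ((x.den : ℝ)) ≠ 0 := by
    exact_mod_cast x.pos.ne'
  push_cast
  field_simp
  ring

lemma ptv_med_eq (m : ℤ) (p q : ℚ) :
    ptv ((p.num + m * p.den) + (q.num + m * q.den), (p.den : ℤ) + (q.den : ℤ))
      = (((m + mediant p q : ℚ) : ℝ) : OnePoint ℝ) := by
  have hd0 : (0:ℤ) < (p.den : ℤ) + (q.den : ℤ) := by
    have h1 := p.pos; have h2 := q.pos; omega
  rw [ptv, if_neg (by simpa using hd0.ne')]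
  congr 1
  have hme : ((mediant p q : ℚ) : ℝ)
      = ((p.num + q.num : ℤ) : ℝ) / (((p.den : ℤ) + (q.den : ℤ) : ℤ) : ℝ) := by
    rw [show mediant p q = ((p.num + q.num : ℤ) : ℚ) / (((p.den : ℤ) + (q.den : ℤ) : ℤ) : ℚ)
      from rfl]
    push_cast
    ring
  rw [Rat.cast_add, Rat.cast_intCast, hme]
  have hd' : ((p.den : ℝ)) + ((q.den : ℝ)) ≠ 0 := by
    have : (0:ℝ) < ((p.den : ℝ)) + ((q.den : ℝ)) := by exact_mod_cast hd0
    exact this.ne'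
  push_cast
  field_simp
  ring

end Farey
open Farey

/-- **Lemma (classification of tiles by word length).** Let `g` be an element of the Farey
group with `‖g‖ = n > 0` and consider the image of `{0,1,∞}` under the Möbius transformation
`g` (whose elements, listed increasingly, are `p < r < q ≤ ∞`).  Then either the image is
`{n, n+1, ∞}`, or it is `{−n, 1−n, ∞}`, or there are `m ∈ ℤ` and a pair `p', q'` of
consecutive terms of `F_{n−|m|−1}` such that the image is
`{m + p', m + (p' ⊕ q'), m + q'}`. -/
theorem word_length_farey_all_tiles (g : PSL(2, ℤ)) (hg : g ∈ fareyGroup) (n : ℕ)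
    (hn : 0 < n) (hlen : wordLength g = n) :
    mob g '' {((0 : ℝ) : OnePoint ℝ), ((1 : ℝ) : OnePoint ℝ), ∞} =
        {(((n : ℝ)) : OnePoint ℝ), (((n : ℝ) + 1 : ℝ) : OnePoint ℝ), ∞} ∨
    mob g '' {((0 : ℝ) : OnePoint ℝ), ((1 : ℝ) : OnePoint ℝ), ∞} =
        {((-(n : ℝ) : ℝ) : OnePoint ℝ), ((1 - (n : ℝ) : ℝ) : OnePoint ℝ), ∞} ∨
    ∃ (m : ℤ) (k : ℕ) (p q : ℚ), (n : ℤ) = k + |m| + 1 ∧ IsFareyPairIn k p q ∧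
      mob g '' {((0 : ℝ) : OnePoint ℝ), ((1 : ℝ) : OnePoint ℝ), ∞} =
        {(((m + p : ℚ) : ℝ) : OnePoint ℝ), (((m + mediant p q : ℚ) : ℝ) : OnePoint ℝ),
          (((m + q : ℚ) : ℝ) : OnePoint ℝ)} := by
  obtain ⟨t, r, hnode⟩ := classify n g hg hlen
  have himg := node_image hnode
  cases t with
  | fanP =>
      left
      rw [himg]
      have eX : ptv (Xv n .fanP) = (((n : ℝ)) : OnePoint ℝ) := by
        rw [show Xv n Farey.Tile.fanP = ((n:ℤ), 1) from rfl, ptv,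
          if_neg (by norm_num : (((n:ℤ), (1:ℤ)) : ℤ × ℤ).2 ≠ 0)]
        congr 1
        push_cast
        ring
      have eY : ptv (Xv n .fanP + Zv n .fanP) = ((((n : ℝ) + 1 : ℝ)) : OnePoint ℝ) := by
        rw [show Xv n Farey.Tile.fanP + Zv n Farey.Tile.fanP = ((n:ℤ)+1, 1+0) from rfl, ptv,
          if_neg (by norm_num : (((n:ℤ)+1, (1:ℤ)+0) : ℤ × ℤ).2 ≠ 0)]
        congr 1
        push_cast
        ring
      have eZ : ptv (Zv n .fanP) = (∞ : OnePoint ℝ) := by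
        rw [show Zv n Farey.Tile.fanP = (1, 0) from rfl, ptv, if_pos rfl]
      rw [eX, eY, eZ]
  | fanN =>
      right; left
      rw [himg]
      have eX : ptv (Xv n .fanN) = ((-(n : ℝ) : ℝ) : OnePoint ℝ) := by
        rw [show Xv n Farey.Tile.fanN = (-(n:ℤ), 1) from rfl, ptv,
          if_neg (by norm_num : ((-(n:ℤ), (1:ℤ)) : ℤ × ℤ).2 ≠ 0)]
        congr 1
        push_cast
        ring
      have eY : ptv (Xv n .fanN + Zv n .fanN) = (((1 - (n : ℝ) : ℝ)) : OnePoint ℝ) := by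
        rw [show Xv n Farey.Tile.fanN + Zv n Farey.Tile.fanN = (-(n:ℤ)+1, 1+0) from rfl, ptv,
          if_neg (by norm_num : ((-(n:ℤ)+1, (1:ℤ)+0) : ℤ × ℤ).2 ≠ 0)]
        congr 1
        push_cast
        ring
      have eZ : ptv (Zv n .fanN) = (∞ : OnePoint ℝ) := by
        rw [show Zv n Farey.Tile.fanN = (1, 0) from rfl, ptv, if_pos rfl]
      rw [eX, eY, eZ]
  | fin m k p q =>
      right; right
      obtain ⟨hpair, hlev⟩ := node_fp hnode
      refine ⟨m, k, p, q, hlev, hpair, ?_⟩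
      rw [himg]
      rw [show Xv n (Farey.Tile.fin m k p q) = (p.num + m * p.den, (p.den:ℤ)) from rfl,
        show Zv n (Farey.Tile.fin m k p q) = (q.num + m * q.den, (q.den:ℤ)) from rfl,
        show (((p.num + m * p.den, (p.den:ℤ)) : ℤ × ℤ) + ((q.num + m * q.den, (q.den:ℤ)) : ℤ × ℤ))
          = ((p.num + m * p.den) + (q.num + m * q.den), (p.den:ℤ) + (q.den:ℤ)) from rfl,
        ptv_fin_eq m p, ptv_med_eq m p q, ptv_fin_eq m q]
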